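/- arXiv:2108.01524 — 3 statements merged into one kernel-verified Lean document; each statement's English description precedes it below -/
import Mathlib

section
/- The tropical hyperfield T is algebraically closed: every univariate polynomial over T of degree at least 1 (with at least two monomial terms, or allowing root -∞) has a root in T. -/
open Set
open scoped Classical

/-- The axioms of a (Krasner) hyperfield on a carrier `H`, for a multivalued
addition `add`, multiplication `mul`, additive inverse `neg`, and constants. -/
structure IsHyperfield {H : Type*} (add : H → H → Set H) (mul : H → H → H)
    (neg : H → H) (zero one : H) : Prop where
  add_nonempty : ∀ x y, (add x y).Nonempty
  hadd_comm : ∀ x y, add x y = add y x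
  hadd_assoc : ∀ x y z, (⋃ w ∈ add x y, add w z) = ⋃ w ∈ add y z, add x w
  zero_hadd : ∀ x, add zero x = {x}
  hneg_add : ∀ x, zero ∈ add x (neg x)
  hneg_unique : ∀ x y, zero ∈ add x y → y = neg x
  reversible : ∀ x y z, x ∈ add y z → z ∈ add x (neg y)
  hmul_comm : ∀ x y, mul x y = mul y x
  hmul_assoc : ∀ x y z, mul (mul x y) z = mul x (mul y z)
  one_hmul : ∀ x, mul one x = x
  zero_hmul : ∀ x, mul zero x = zero
  hdistrib : ∀ a x y, (mul a) '' (add x y) = add (mul a x) (mul a y)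
  zero_ne_one : zero ≠ one
  exists_inv : ∀ x, x ≠ zero → ∃ y, mul x y = one

/-- Multivalued hypersum of a list of elements. -/
def hsum {H : Type*} (add : H → H → Set H) (zero : H) : List H → Set H
  | [] => {zero}
  | a :: l => ⋃ b ∈ hsum add zero l, add a b

/-- Powers with respect to a monoid multiplication. -/
def hpow {H : Type*} (mul : H → H → H) (one : H) (a : H) : ℕ → H
  | 0 => one
  | n + 1 => mul a (hpow mul one a n)

/-- Multivalued evaluation of the univariate polynomial `⊞_{i=0}^n c_i ⊙ X^i` at `a`. -/
def evalPoly {H : Type*} (add : H → H → Set H) (mul : H → H → H) (zero one : H)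
    (n : ℕ) (c : ℕ → H) (a : H) : Set H :=
  hsum add zero ((List.range (n + 1)).map fun i => mul (c i) (hpow mul one a i))

/-- Multivalued evaluation of a multivariate polynomial given by a list of
terms (coefficient, exponent vector) at a point `x`. -/
def evalMPoly {H : Type*} (add : H → H → Set H) (mul : H → H → H) (zero one : H)
    {n : ℕ} (terms : List (H × (Fin n → ℕ))) (x : Fin n → H) : Set H :=
  hsum add zero (terms.map fun t =>
    mul t.1 ((List.ofFn fun j => hpow mul one (x j) (t.2 j)).foldr mul one))

/-- Hyperfield homomorphism axioms. -/
structure IsHyperfieldHom {H1 H2 : Type*}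
    (add1 : H1 → H1 → Set H1) (mul1 : H1 → H1 → H1) (zero1 one1 : H1)
    (add2 : H2 → H2 → Set H2) (mul2 : H2 → H2 → H2) (zero2 one2 : H2)
    (f : H1 → H2) : Prop where
  map_zero : f zero1 = zero2
  map_one : f one1 = one2
  map_mul : ∀ x y, f (mul1 x y) = mul2 (f x) (f y)
  map_add : ∀ x y, f '' (add1 x y) ⊆ add2 (f x) (f y)

/-- `f` is relatively algebraically closed: every root of the coefficientwise
push-forward of a univariate polynomial lifts through `f` to a root. -/
def IsRAC {H1 H2 : Type*}
    (add1 : H1 → H1 → Set H1) (mul1 : H1 → H1 → H1) (zero1 one1 : H1)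
    (add2 : H2 → H2 → Set H2) (mul2 : H2 → H2 → H2) (zero2 one2 : H2)
    (f : H1 → H2) : Prop :=
  ∀ (n : ℕ) (c : ℕ → H1) (b : H2),
    zero2 ∈ evalPoly add2 mul2 zero2 one2 n (fun i => f (c i)) b →
    ∃ a : H1, f a = b ∧ zero1 ∈ evalPoly add1 mul1 zero1 one1 n c a

/-- Tropical hyperaddition on `ℝ ∪ {-∞}`. -/
noncomputable def Tadd (x y : WithBot ℝ) : Set (WithBot ℝ) :=
  if x = y then {z | z ≤ x} else {max x y}

/-- Tropical multiplication: addition of extended reals. -/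
noncomputable def Tmul (x y : WithBot ℝ) : WithBot ℝ := x + y

/-- Hyperaddition of the tropical complex hyperfield `TC` on `ℂ`. -/
noncomputable def TCadd (z w : ℂ) : Set ℂ :=
  if w = -z then {c | ‖c‖ ≤ ‖z‖}
  else if ‖w‖ < ‖z‖ then {z}
  else if ‖z‖ < ‖w‖ then {w}
  else {c | ∃ t : ℝ, 0 ≤ t ∧ t ≤ 1 ∧
    c = ((‖z‖ / ‖(t : ℂ) * z + (1 - (t : ℂ)) * w‖ : ℝ) : ℂ) *
      ((t : ℂ) * z + (1 - (t : ℂ)) * w)}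

/-- The homomorphism `η(z) = log |z|` from `TC` to the tropical hyperfield. -/
noncomputable def eta (z : ℂ) : WithBot ℝ :=
  if z = 0 then ⊥ else ((Real.log (‖z‖) : ℝ) : WithBot ℝ)

/-- Hyperaddition of the hyperfield of signs. -/
noncomputable def Sadd (x y : SignType) : Set SignType :=
  if x = 0 then {y} else if y = 0 then {x} else if x = y then {x} else Set.univ

/-- Hyperaddition of the Krasner hyperfield on `Bool` (`false = 0`, `true = 1`). -/
def Kadd (x y : Bool) : Set Bool :=
  if x = false then {y} else if y = false then {x} else Set.univ

/-- `c ∈ (X ⊞ -a) ⊙ d` : the coefficients `c` arise from multiplying the linear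
factor `X ⊞ (-a)` with the polynomial with coefficients `d`. -/
def LinFactor {H : Type*} (add : H → H → Set H) (mul : H → H → H) (zero : H)
    (neg : H → H) (a : H) (c d : ℕ → H) : Prop :=
  ∀ i, c i ∈ add (if i = 0 then zero else d (i - 1)) (mul (neg a) (d i))

/-- `MultGe … a n c k` : the multiplicity of `a` as a root of the degree-`n`
polynomial with coefficients `c` is at least `k` (recursive peeling of linear factors). -/
def MultGe {H : Type*} (add : H → H → Set H) (mul : H → H → H) (zero one : H)
    (neg : H → H) (a : H) : ℕ → (ℕ → H) → ℕ → Prop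
  | _, _, 0 => True
  | n, c, k + 1 => zero ∈ evalPoly add mul zero one n c a ∧
      ∃ d : ℕ → H, (∀ i, n ≤ i → d i = zero) ∧ LinFactor add mul zero neg a c d ∧
        MultGe add mul zero one neg a (n - 1) d k

/-- The multiplicity of `a` as a root. -/
noncomputable def hmult {H : Type*} (add : H → H → Set H) (mul : H → H → H)
    (zero one : H) (neg : H → H) (n : ℕ) (c : ℕ → H) (a : H) : ℕ :=
  sSup {k | MultGe add mul zero one neg a n c k}

/-- The multiplicity bound: the sum of root multiplicities is at most the degree. -/
def MultBound {H : Type*} (add : H → H → Set H) (mul : H → H → H)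
    (zero one : H) (neg : H → H) : Prop :=
  ∀ (n : ℕ) (c : ℕ → H), c n ≠ zero →
    ∀ S : Finset H, (S.sum fun a => hmult add mul zero one neg n c a) ≤ n

/-- The multiplicity equality: the sum of root multiplicities equals the degree. -/
def MultEq {H : Type*} (add : H → H → Set H) (mul : H → H → H)
    (zero one : H) (neg : H → H) : Prop :=
  MultBound add mul zero one neg ∧
    ∀ (n : ℕ) (c : ℕ → H), c n ≠ zero →
      ∃ S : Finset H, (S.sum fun a => hmult add mul zero one neg n c a) = n

/-- Iterated splitting off of a list of linear factors: `c ∈ (X ⊞ -a₁) ⊙ ⋯ ⊙ (X ⊞ -aₘ) ⊙ d`. -/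
def MultiLinFactor {H : Type*} (add : H → H → Set H) (mul : H → H → H) (zero : H)
    (neg : H → H) : List H → (ℕ → H) → (ℕ → H) → Prop
  | [], c, d => c = d
  | a :: l, c, d => ∃ e : ℕ → H, LinFactor add mul zero neg a c e ∧
      MultiLinFactor add mul zero neg l e d

/-- The inheritance property: any sub-multiset of the multiset of roots (with
multiplicity) of size at most the degree can be split off as linear factors. -/
def Inheritance {H : Type*} (add : H → H → Set H) (mul : H → H → H)
    (zero one : H) (neg : H → H) : Prop :=
  ∀ (n : ℕ) (c : ℕ → H), c n ≠ zero →
    ∀ l : List H, l.length ≤ n →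
      (∀ a : H, (l.filter fun x => x = a).length ≤ hmult add mul zero one neg n c a) →
      ∃ q : ℕ → H, MultiLinFactor add mul zero neg l c q

lemma hsum_nonempty_T (L : List (WithBot ℝ)) : (hsum Tadd ⊥ L).Nonempty := by
  induction L with
  | nil => exact ⟨⊥, rfl⟩
  | cons a l ih =>
    obtain ⟨b, hb⟩ := ih
    refine ⟨max a b, Set.mem_biUnion hb ?_⟩
    unfold Tadd; split
    · next h => simp [h]
    · simp

lemma hsum_le_T {L : List (WithBot ℝ)} {m : WithBot ℝ} (h : ∀ x ∈ L, x ≤ m) :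
    ∀ z ∈ hsum Tadd ⊥ L, z ≤ m := by
  induction L with
  | nil => intro z hz; simp only [hsum, Set.mem_singleton_iff] at hz; simp [hz]
  | cons a l ih =>
    intro z hz
    simp only [hsum, Set.mem_iUnion, exists_prop] at hz
    obtain ⟨b, hb, hzb⟩ := hz
    have hbm : b ≤ m := ih (fun x hx => h x (List.mem_cons_of_mem _ hx)) b hb
    have ham : a ≤ m := h a List.mem_cons_self
    unfold Tadd at hzb; split at hzb
    · exact le_trans hzb ham
    · simp only [Set.mem_singleton_iff] at hzb; subst hzb; exact max_le ham hbm

lemma mem_hsum_max_T {L : List (WithBot ℝ)} {m : WithBot ℝ} (hm : m ∈ L)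
    (h : ∀ x ∈ L, x ≤ m) : m ∈ hsum Tadd ⊥ L := by
  induction L with
  | nil => cases hm
  | cons a l ih =>
    rcases List.mem_cons.mp hm with rfl | hm'
    · obtain ⟨b, hb⟩ := hsum_nonempty_T l
      have hbm : b ≤ m := hsum_le_T (fun x hx => h x (List.mem_cons_of_mem _ hx)) b hb
      refine Set.mem_biUnion hb ?_
      unfold Tadd; split
      · exact le_refl m
      · next hne => simp [max_eq_left hbm]
    · have hml : m ∈ hsum Tadd ⊥ l :=
        ih hm' (fun x hx => h x (List.mem_cons_of_mem _ hx))
      refine Set.mem_biUnion hml ?_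
      unfold Tadd; split
      · next heq => exact le_of_eq heq.symm
      · next hne =>
        have ham : a ≤ m := h a List.mem_cons_self
        simp [max_eq_right ham]

lemma Iic_subset_hsum_T {L : List (WithBot ℝ)} {m : WithBot ℝ}
    (hsub : [m, m].Sublist L) (h : ∀ x ∈ L, x ≤ m) :
    Set.Iic m ⊆ hsum Tadd ⊥ L := by
  induction L with
  | nil => cases hsub
  | cons a l ih =>
    cases hsub with
    | cons _ hsub' =>
      have hIic : Set.Iic m ⊆ hsum Tadd ⊥ l :=
        ih hsub' (fun x hx => h x (List.mem_cons_of_mem _ hx))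
      intro z hz
      have ham : a ≤ m := h a List.mem_cons_self
      by_cases hza : z ≤ a
      · refine Set.mem_biUnion (hIic ham) ?_
        unfold Tadd; split
        · exact hza
        · next hne => exact absurd rfl hne
      · refine Set.mem_biUnion (hIic hz) ?_
        unfold Tadd; split
        · next heq => exact absurd (heq ▸ le_refl a) hza
        · simp [max_eq_right (le_of_not_ge hza)]
    | cons_cons _ hsub' =>
      -- here a = m and [m] <+ l
      have hml : m ∈ l := hsub'.subset List.mem_cons_self
      have hmem : m ∈ hsum Tadd ⊥ l :=
        mem_hsum_max_T hml (fun x hx => h x (List.mem_cons_of_mem _ hx))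
      intro z hz
      refine Set.mem_biUnion hmem ?_
      unfold Tadd; split
      · exact hz
      · next hne => exact absurd rfl hne

lemma hpow_T (r : ℝ) (i : ℕ) :
    hpow Tmul (0 : WithBot ℝ) ((r : ℝ) : WithBot ℝ) i = (((i : ℝ) * r : ℝ) : WithBot ℝ) := by
  induction i with
  | zero => simp [hpow]
  | succ k ih =>
    simp only [hpow, ih, Tmul]
    rw [← WithBot.coe_add]
    congr 1
    push_cast
    ring

lemma hpow_bot_T (i : ℕ) (hi : 1 ≤ i) :
    hpow Tmul (0 : WithBot ℝ) (⊥ : WithBot ℝ) i = ⊥ := by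
  cases i with
  | zero => omega
  | succ k => simp [hpow, Tmul]

/-- The tropical hyperfield `T` is algebraically closed:
every univariate polynomial of degree at least 1 has a root. -/
theorem tropical_algClosed (n : ℕ) (hn : 1 ≤ n) (c : ℕ → WithBot ℝ) (hc : c n ≠ ⊥) :
    ∃ a : WithBot ℝ, (⊥ : WithBot ℝ) ∈ evalPoly Tadd Tmul ⊥ 0 n c a := by
  by_cases h0 : c 0 = ⊥
  · -- take a = ⊥; every term is ⊥
    refine ⟨⊥, ?_⟩
    unfold evalPoly
    set f : ℕ → WithBot ℝ := fun i => Tmul (c i) (hpow Tmul 0 (⊥ : WithBot ℝ) i) with hf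
    have hfbot : ∀ i, f i = ⊥ := by
      intro i
      cases i with
      | zero => simp [hf, Tmul, h0]
      | succ k => simp [hf, Tmul, hpow_bot_T (k + 1) (by omega)]
    have hrepl : (List.range (n + 1)).map f = List.replicate (n + 1) ⊥ := by
      rw [List.eq_replicate_iff]
      refine ⟨by simp, ?_⟩
      intro x hx
      simp only [List.mem_map] at hx
      obtain ⟨i, _, rfl⟩ := hx
      exact hfbot i
    rw [hrepl]
    refine Iic_subset_hsum_T (m := ⊥) ?_ ?_ (Set.mem_Iic.mpr le_rfl)
    · have : [⊥, ⊥] = List.replicate 2 (⊥ : WithBot ℝ) := rfl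
      rw [this]
      exact (List.replicate_sublist_replicate _).mpr (by omega)
    · intro x hx
      simp only [List.mem_replicate] at hx
      simp [hx.2]
  · -- c 0 ≠ ⊥ : choose a = min over k of (c0 - ck)/k
    obtain ⟨c0, hc0⟩ := WithBot.ne_bot_iff_exists.mp h0
    set S : Finset ℕ := (Finset.range (n + 1)).filter (fun k => 1 ≤ k ∧ c k ≠ ⊥) with hS
    have hnS : n ∈ S := by
      simp only [hS, Finset.mem_filter, Finset.mem_range]
      exact ⟨by omega, hn, hc⟩
    have hSne : S.Nonempty := ⟨n, hnS⟩
    set g : ℕ → ℝ := fun k => (c0 - (c k).unbotD 0) / k with hg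
    set r : ℝ := S.inf' hSne g with hr
    obtain ⟨j, hjS, hjr⟩ := S.exists_mem_eq_inf' hSne g
    refine ⟨((r : ℝ) : WithBot ℝ), ?_⟩
    unfold evalPoly
    set f : ℕ → WithBot ℝ := fun i => Tmul (c i) (hpow Tmul 0 ((r : ℝ) : WithBot ℝ) i) with hf
    have hfr : ∀ i, f i = c i + (((i : ℝ) * r : ℝ) : WithBot ℝ) := by
      intro i; simp [hf, Tmul, hpow_T]
    have hf0 : f 0 = (c0 : WithBot ℝ) := by
      rw [hfr 0]; simp [← hc0]
    have hjS' := hjS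
    simp only [hS, Finset.mem_filter, Finset.mem_range] at hjS'
    obtain ⟨hjn, hj1, hjbot⟩ := hjS'
    obtain ⟨cj, hcj⟩ := WithBot.ne_bot_iff_exists.mp hjbot
    have hjpos : (0 : ℝ) < (j : ℝ) := by exact_mod_cast hj1
    have hgj : g j = (c0 - cj) / j := by
      simp [hg, ← hcj]
    have hfj : f j = (c0 : WithBot ℝ) := by
      rw [hfr j, ← hcj, ← WithBot.coe_add]
      congr 1
      rw [hr, hjr, hgj]
      field_simp
      ring
    -- all terms ≤ c0
    have hub : ∀ x ∈ (List.range (n + 1)).map f, x ≤ (c0 : WithBot ℝ) := by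
      intro x hx
      simp only [List.mem_map, List.mem_range] at hx
      obtain ⟨i, hi, rfl⟩ := hx
      rcases Nat.eq_zero_or_pos i with rfl | hipos
      · exact le_of_eq hf0
      · by_cases hib : c i = ⊥
        · rw [hfr i, hib]; simp
        · obtain ⟨ci, hci⟩ := WithBot.ne_bot_iff_exists.mp hib
          have hiS : i ∈ S := by
            simp only [hS, Finset.mem_filter, Finset.mem_range]
            exact ⟨hi, hipos, hib⟩
          have hri : r ≤ g i := Finset.inf'_le g hiS
          have hgi : g i = (c0 - ci) / i := by simp [hg, ← hci]
          have hipos' : (0 : ℝ) < (i : ℝ) := by exact_mod_cast hipos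
          have : ci + (i : ℝ) * r ≤ c0 := by
            rw [hgi] at hri
            have := (le_div_iff₀ hipos').mp (by linarith [hri] : r ≤ (c0 - ci) / i)
            nlinarith
          rw [hfr i, ← hci, ← WithBot.coe_add]
          exact_mod_cast this
    -- sublist [c0, c0] of the term list
    have hjtail : (c0 : WithBot ℝ) ∈ ((List.range n).map (fun k => f (k + 1))) := by
      simp only [List.mem_map, List.mem_range]
      exact ⟨j - 1, by omega, by rw [show j - 1 + 1 = j by omega, hfj]⟩
    have hL : (List.range (n + 1)).map f
        = f 0 :: ((List.range n).map (fun k => f (k + 1))) := by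
      rw [List.range_succ_eq_map, List.map_cons, List.map_map]
      rfl
    have hsub : ([(c0 : WithBot ℝ), (c0 : WithBot ℝ)]).Sublist ((List.range (n + 1)).map f) := by
      rw [hL, hf0]
      exact (List.singleton_sublist.mpr hjtail).cons_cons _
    exact Iic_subset_hsum_T hsub hub (by simp)
end

section
/- The tropical complex hyperfield TC does not satisfy the multiplicity bound: the degree-2 polynomial p = X² ⊞ X ⊞ 1 over TC has at least three distinct roots, namely -1, i, and -i. -/
open Set
open scoped Classical

lemma zero_mem_ball : (0:ℂ) ∈ TCadd 1 (-1) := by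
  simp [TCadd]

lemma TCadd_zero (z : ℂ) (hz : z ≠ 0) : TCadd z 0 = {z} := by
  simp [TCadd, hz, neg_eq_zero, norm_pos_iff.mpr hz]

lemma w_mem (z w : ℂ) (h1 : w ≠ -z) (h2 : ‖z‖ = ‖w‖) :
    w ∈ TCadd z w := by
  have hw : w ≠ 0 := by
    rintro rfl
    have hz : z = 0 := by simpa using h2
    exact h1 (by simp [hz])
  have habs : ((‖w‖ : ℝ) : ℂ) ≠ 0 := by
    exact_mod_cast norm_ne_zero_iff.mpr hw
  simp [TCadd, h1, h2]
  exact ⟨0, le_refl 0, zero_le_one, by simp; field_simp⟩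

lemma root_of (a : ℂ) (h1 : a * a ≠ 0) (hb : -1 ∈ TCadd a (a * a)) :
    (0 : ℂ) ∈ evalPoly TCadd (· * ·) 0 1 2 (fun _ => 1) a := by
  simp only [evalPoly, List.range_succ, List.range_zero, List.map, hsum,
    Set.mem_iUnion, List.nil_append, List.cons_append, exists_prop]
  have hp2 : (1 : ℂ) * hpow (· * ·) 1 a 2 = a * a := by
    simp [hpow]
  have hp1 : (1 : ℂ) * hpow (· * ·) 1 a 1 = a := by
    simp [hpow]
  have hp0 : (1 : ℂ) * hpow (· * ·) 1 a 0 = 1 := by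
    simp [hpow]
  rw [hp0, hp1, hp2]
  exact ⟨-1, ⟨a * a, ⟨0, rfl, by rw [TCadd_zero _ h1]; rfl⟩, hb⟩, zero_mem_ball⟩

/-- `TC` does not satisfy the multiplicity bound: the degree-2
polynomial `X² ⊞ X ⊞ 1` has (at least) three distinct roots `-1`, `i`, `-i`. -/
theorem TC_fails_multiplicity_bound :
    ({-1, Complex.I, -Complex.I} : Finset ℂ).card = 3 ∧
    ∀ a ∈ ({-1, Complex.I, -Complex.I} : Finset ℂ),
      (0 : ℂ) ∈ evalPoly TCadd (· * ·) 0 1 2 (fun _ => 1) a := by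
  constructor
  · rw [Finset.card_insert_of_notMem (by norm_num [Complex.ext_iff]),
      Finset.card_insert_of_notMem (by norm_num [Complex.ext_iff])]
    rfl
  · intro a ha
    simp only [Finset.mem_insert, Finset.mem_singleton] at ha
    rcases ha with rfl | rfl | rfl
    · apply root_of _ (by norm_num)
      rw [show ((-1 : ℂ) * -1) = 1 by ring]
      simp [TCadd]
    · apply root_of _ (by simp [Complex.I_ne_zero])
      rw [show (Complex.I * Complex.I) = -1 by simp [Complex.I_mul_I]]
      exact w_mem Complex.I (-1) (by simp [Complex.ext_iff]) (by simp)
    · apply root_of _ (by simp [Complex.I_ne_zero])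
      rw [show (-Complex.I * -Complex.I) = -1 by
        rw [neg_mul_neg, Complex.I_mul_I]]
      exact w_mem (-Complex.I) (-1) (by simp [Complex.ext_iff]) (by simp)
end

section
/- Let K be a field, H a hyperfield satisfying the multiplicity bound, and f: K → H a hyperfield homomorphism (viewing K as a hyperfield with singleton addition). If p ∈ K[X] splits into linear factors over K, then V(f_*(p)) ⊆ f(V(p)): every root of the push-forward f_*(p) over H lifts through f to a root of p in K. -/
open Set
open scoped Classical

section Aux
variable {H : Type*} {add : H → H → Set H} {mul : H → H → H} {neg : H → H} {zero one : H}

lemma mem_hsum_cons {x t : H} {l : List H} :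
    x ∈ hsum add zero (t :: l) ↔ ∃ s, s ∈ hsum add zero l ∧ x ∈ add t s := by
  simp [hsum]

variable (h : IsHyperfield add mul neg zero one)
include h

lemma aux_mul_zero (x : H) : mul x zero = zero := by rw [h.hmul_comm]; exact h.zero_hmul x

lemma aux_mul_one (x : H) : mul x one = x := by rw [h.hmul_comm]; exact h.one_hmul x

lemma aux_add_zero (x : H) : add x zero = {x} := by rw [h.hadd_comm]; exact h.zero_hadd x

lemma aux_neg_zero : neg zero = zero :=
  (h.hneg_unique zero zero (by rw [h.zero_hadd]; rfl)).symm

lemma aux_neg_eq (x : H) : neg x = mul (neg one) x := by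
  have h1 : zero ∈ add x (mul x (neg one)) := by
    have hd := h.hdistrib x one (neg one)
    have h0 : mul x zero ∈ mul x '' (add one (neg one)) := ⟨zero, h.hneg_add one, rfl⟩
    rw [aux_mul_zero h, hd, aux_mul_one h] at h0
    exact h0
  rw [← h.hneg_unique x (mul x (neg one)) h1, h.hmul_comm]

lemma aux_neg_mul (x y : H) : mul (neg x) y = neg (mul x y) := by
  rw [aux_neg_eq h x, aux_neg_eq h (mul x y), h.hmul_assoc]

lemma aux_neg_neg (x : H) : neg (neg x) = x :=
  (h.hneg_unique (neg x) x (by rw [h.hadd_comm]; exact h.hneg_add x)).symm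

lemma aux_rev {x y z : H} (hx : x ∈ add y z) : y ∈ add x (neg z) := by
  apply h.reversible; rwa [h.hadd_comm]

lemma aux_mul_left_comm (x y z : H) : mul x (mul y z) = mul y (mul x z) := by
  rw [← h.hmul_assoc, h.hmul_comm x y, h.hmul_assoc]

lemma aux_key (b binv s q : H) (hb : mul b binv = one) :
    mul (neg b) (mul s (mul binv q)) = mul (neg s) q := by
  rw [aux_neg_mul h b, aux_neg_mul h s]
  congr 1
  rw [aux_mul_left_comm h b s, ← h.hmul_assoc b, hb, h.one_hmul]

lemma hsum_zeros : ∀ l : List H, (∀ x ∈ l, x = zero) → hsum add zero l = {zero} := by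
  intro l hl
  induction l with
  | nil => rfl
  | cons a l ih =>
    have ha : a = zero := hl a List.mem_cons_self
    have : hsum add zero l = {zero} := ih fun x hx => hl x (List.mem_cons_of_mem a hx)
    show (⋃ b ∈ hsum add zero l, add a b) = {zero}
    rw [this, ha]
    simp [h.zero_hadd]

lemma hpow_mul_hpow (x y : H) (hxy : mul x y = one) :
    ∀ i, mul (hpow mul one x i) (hpow mul one y i) = one := by
  intro i
  induction i with
  | zero => exact aux_mul_one h one
  | succ i ih =>
    show mul (mul x (hpow mul one x i)) (mul y (hpow mul one y i)) = one
    rw [h.hmul_assoc, aux_mul_left_comm h (hpow mul one x i), ← h.hmul_assoc, hxy, h.one_hmul, ih]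

end Aux
section Aux2
variable {H : Type*} {add : H → H → Set H} {mul : H → H → H} {neg : H → H} {zero one : H}

lemma chain_of_mem_hsum : ∀ (l : List H) (x : H), x ∈ hsum add zero l →
    ∃ s : ℕ → H, s 0 = x ∧ (∀ i, l.length ≤ i → s i = zero) ∧
      ∀ i (hi : i < l.length), s i ∈ add (l.get ⟨i, hi⟩) (s (i + 1)) := by
  intro l
  induction l with
  | nil =>
    intro x hx
    have : x = zero := hx
    exact ⟨fun _ => zero, this.symm, fun _ _ => rfl, fun i hi => absurd hi (by simp)⟩
  | cons t l ih =>
    intro x hx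
    obtain ⟨y, hy, hxy⟩ := mem_hsum_cons.mp hx
    obtain ⟨s', hs0, hslen, hschain⟩ := ih y hy
    refine ⟨fun i => Nat.casesOn i x s', rfl, ?_, ?_⟩
    · intro i hi
      match i, hi with
      | j + 1, hi => exact hslen j (by simpa using hi)
    · intro i hi
      match i, hi with
      | 0, _ => simpa [hs0] using hxy
      | j + 1, hi => exact hschain j (by simpa using hi)

variable (h : IsHyperfield add mul neg zero one)
include h

lemma exists_factor_of_root (n : ℕ) (c : ℕ → H) (b : H)
    (hc : ∀ i, n < i → c i = zero)
    (hb : zero ∈ evalPoly add mul zero one n c b) :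
    ∃ d : ℕ → H, (∀ i, n ≤ i → d i = zero) ∧ LinFactor add mul zero neg b c d := by
  by_cases hb0 : b = zero
  · rw [hb0] at hb ⊢
    have hc0 : c 0 = zero := by
      have heq : evalPoly add mul zero one n c zero = {c 0} := by
        unfold evalPoly
        rw [List.range_succ_eq_map, List.map_cons, List.map_map]
        have htail : hsum add zero ((List.range n).map
            ((fun i => mul (c i) (hpow mul one zero i)) ∘ Nat.succ)) = {zero} := by
          apply hsum_zeros h
          intro x hx
          simp only [List.mem_map] at hx
          obtain ⟨j, _, hj⟩ := hx
          rw [← hj]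
          show mul (c (j + 1)) (hpow mul one zero (j + 1)) = zero
          show mul (c (j + 1)) (mul zero (hpow mul one zero j)) = zero
          rw [h.zero_hmul, aux_mul_zero h]
        show (⋃ s ∈ hsum add zero _, add (mul (c 0) (hpow mul one zero 0)) s) = {c 0}
        rw [htail]
        show (⋃ s ∈ ({zero} : Set H), add (mul (c 0) one) s) = {c 0}
        simp [aux_add_zero h, aux_mul_one h]
      rw [heq] at hb
      exact hb.symm
    refine ⟨fun i => c (i + 1), fun i hi => hc _ (by omega), fun i => ?_⟩
    cases i with
    | zero =>
      show c 0 ∈ add zero (mul (neg zero) (c 1))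
      rw [aux_neg_zero h, h.zero_hmul, h.zero_hadd, hc0]
      rfl
    | succ j =>
      show c (j + 1) ∈ add (c (j + 1 - 1 + 1)) (mul (neg zero) (c (j + 2)))
      rw [aux_neg_zero h, h.zero_hmul, aux_add_zero h]
      simp
  · obtain ⟨binv, hbinv⟩ := h.exists_inv b hb0
    have hbinv' : mul binv b = one := by rw [h.hmul_comm]; exact hbinv
    obtain ⟨s, hs0, hslen, hschain⟩ := chain_of_mem_hsum _ zero hb
    have hlen : ((List.range (n + 1)).map fun i => mul (c i) (hpow mul one b i)).length
        = n + 1 := by simp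
    set d : ℕ → H := fun j => mul (s (j + 1)) (hpow mul one binv (j + 1)) with hd
    have hdz : ∀ i, n ≤ i → d i = zero := by
      intro i hi
      have hz : s (i + 1) = zero := hslen _ (by rw [hlen]; omega)
      show mul (s (i + 1)) _ = zero
      rw [hz, h.zero_hmul]
    -- key membership for i ≤ n
    have hkey : ∀ i, i < n + 1 → c i ∈ add (mul (hpow mul one binv i) (s i))
        (mul (hpow mul one binv i) (neg (s (i + 1)))) := by
      intro i hi
      have hi' : i < ((List.range (n + 1)).map fun i => mul (c i) (hpow mul one b i)).length := by
        rw [hlen]; exact hi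
      have h1 := hschain i hi'
      have hget : ((List.range (n + 1)).map fun i => mul (c i) (hpow mul one b i)).get ⟨i, hi'⟩
          = mul (c i) (hpow mul one b i) := by simp
      rw [hget] at h1
      have h2 : mul (c i) (hpow mul one b i) ∈ add (s i) (neg (s (i + 1))) := aux_rev h h1
      have h4 : mul (hpow mul one binv i) (mul (c i) (hpow mul one b i)) ∈
          add (mul (hpow mul one binv i) (s i)) (mul (hpow mul one binv i) (neg (s (i + 1)))) := by
        rw [← h.hdistrib]; exact ⟨_, h2, rfl⟩
      have h5 : mul (hpow mul one binv i) (mul (c i) (hpow mul one b i)) = c i := by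
        rw [aux_mul_left_comm h, hpow_mul_hpow h binv b hbinv' i, aux_mul_one h]
      rwa [h5] at h4
    refine ⟨d, hdz, ?_⟩
    intro i
    rcases Nat.lt_or_ge i (n + 1) with hi | hi
    · cases i with
      | zero =>
        have h4 := hkey 0 hi
        show c 0 ∈ add zero (mul (neg b) (d 0))
        have hd0 : mul (neg b) (d 0) = c 0 := by
          show mul (neg b) (mul (s 1) (hpow mul one binv 1)) = c 0
          show mul (neg b) (mul (s 1) (mul binv (hpow mul one binv 0))) = c 0
          rw [aux_key h b binv _ _ hbinv]
          have h4' : c 0 ∈ add zero (neg (s 1)) := by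
            have e1 : hpow mul one binv 0 = one := rfl
            rw [e1, h.one_hmul, h.one_hmul, hs0] at h4
            exact h4
          rw [h.zero_hadd] at h4'
          have : c 0 = neg (s 1) := h4'
          show mul (neg (s 1)) one = c 0
          rw [aux_mul_one h, this]
        rw [hd0, h.zero_hadd]
        rfl
      | succ j =>
        have h4 := hkey (j + 1) hi
        show c (j + 1) ∈ add (d j) (mul (neg b) (d (j + 1)))
        have e1 : d j = mul (hpow mul one binv (j + 1)) (s (j + 1)) := h.hmul_comm _ _
        have e2 : mul (neg b) (d (j + 1)) =
            mul (hpow mul one binv (j + 1)) (neg (s (j + 2))) := by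
          show mul (neg b) (mul (s (j + 2)) (hpow mul one binv (j + 2))) = _
          show mul (neg b) (mul (s (j + 2)) (mul binv (hpow mul one binv (j + 1)))) = _
          rw [aux_key h b binv _ _ hbinv, h.hmul_comm]
        rw [e1, e2]
        exact h4
    · have hc1 : c i = zero := hc i (by omega)
      have hi0 : i ≠ 0 := by omega
      have hdi : d i = zero := hdz i (by omega)
      have hdi1 : d (i - 1) = zero := hdz (i - 1) (by omega)
      show c i ∈ add (if i = 0 then zero else d (i - 1)) (mul (neg b) (d i))
      rw [if_neg hi0, hdi, hdi1, aux_mul_zero h, h.zero_hadd, hc1]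
      rfl

end Aux2
section Aux3
open Polynomial
variable {H : Type*} {add : H → H → Set H} {mul : H → H → H} {neg : H → H} {zero one : H}
variable {K : Type*} [Field K] {f : K → H}

lemma list_sum_range (g : ℕ → K) : ∀ m : ℕ, ((List.range m).map g).sum = ∑ i ∈ Finset.range m, g i := by
  intro m
  induction m with
  | zero => simp
  | succ m ih => rw [List.range_succ, Finset.sum_range_succ, List.map_append, List.sum_append, ih]; simp

lemma hsum_K : ∀ l : List K, hsum (fun x y : K => ({x + y} : Set K)) 0 l = {l.sum} := by
  intro l
  induction l with
  | nil => simp [hsum]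
  | cons a l ih => show (⋃ b ∈ hsum _ _ l, _) = _; rw [ih]; simp

variable (h : IsHyperfield add mul neg zero one)
variable (hf : IsHyperfieldHom (fun x y : K => ({x + y} : Set K)) (· * ·) 0 1 add mul zero one f)
include h hf

lemma f_add_mem (x y : K) : f (x + y) ∈ add (f x) (f y) :=
  hf.map_add x y ⟨x + y, rfl, rfl⟩

lemma f_neg (x : K) : f (-x) = neg (f x) := by
  apply h.hneg_unique
  have h1 := f_add_mem h hf x (-x)
  rwa [add_neg_cancel, hf.map_zero] at h1

lemma f_ne_zero {x : K} (hx : x ≠ 0) : f x ≠ zero := by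
  intro hz
  have h1 : f (x * x⁻¹) = one := by rw [mul_inv_cancel₀ hx, hf.map_one]
  rw [hf.map_mul, hz, h.zero_hmul] at h1
  exact h.zero_ne_one h1

lemma f_pow (x : K) : ∀ i : ℕ, f (x ^ i) = hpow mul one (f x) i := by
  intro i
  induction i with
  | zero => rw [pow_zero, hf.map_one]; rfl
  | succ i ih => rw [pow_succ, mul_comm, hf.map_mul, ih]; rfl

lemma f_hsum : ∀ (l : List K) (x : K), x ∈ hsum (fun x y : K => ({x + y} : Set K)) 0 l →
    f x ∈ hsum add zero (l.map f) := by
  intro l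
  induction l with
  | nil =>
    intro x hx
    have : x = 0 := hx
    rw [this, hf.map_zero]; rfl
  | cons t l ih =>
    intro x hx
    obtain ⟨s, hs, hxs⟩ := mem_hsum_cons.mp hx
    have hx' : x = t + s := hxs
    rw [hx']
    exact mem_hsum_cons.mpr ⟨f s, ih s hs, f_add_mem h hf t s⟩

lemma f_eval_root {p : Polynomial K} {a : K} (ha : p.eval a = 0) :
    zero ∈ evalPoly add mul zero one p.natDegree (fun i => f (p.coeff i)) (f a) := by
  have h1 : p.eval a ∈ hsum (fun x y : K => ({x + y} : Set K)) 0
      ((List.range (p.natDegree + 1)).map fun i => p.coeff i * a ^ i) := by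
    rw [hsum_K, list_sum_range]
    exact (p.eval_eq_sum_range a).symm ▸ rfl
  have h2 := f_hsum h hf _ _ h1
  rw [ha, hf.map_zero] at h2
  unfold evalPoly
  have h3 : (((List.range (p.natDegree + 1)).map fun i => p.coeff i * a ^ i).map f) =
      (List.range (p.natDegree + 1)).map fun i => mul (f (p.coeff i)) (hpow mul one (f a) i) := by
    rw [List.map_map]
    apply List.map_congr_left
    intro i _
    show f (p.coeff i * a ^ i) = _
    rw [hf.map_mul, f_pow h hf]
  rwa [h3] at h2

lemma linfactor_push (a : K) (q : Polynomial K) :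
    LinFactor add mul zero neg (f a) (fun i => f (((X - C a) * q).coeff i))
      (fun i => f (q.coeff i)) := by
  intro i
  have hco : ((X - C a) * q).coeff i = (if i = 0 then 0 else q.coeff (i - 1)) + -a * q.coeff i := by
    rw [sub_mul, coeff_sub, coeff_C_mul]
    cases i with
    | zero => simp [coeff_X_mul_zero]
    | succ j => rw [coeff_X_mul]; simp; ring
  show f (((X - C a) * q).coeff i) ∈ add (if i = 0 then zero else f (q.coeff (i - 1)))
      (mul (neg (f a)) (f (q.coeff i)))
  rw [hco]
  have h1 := f_add_mem h hf (if i = 0 then 0 else q.coeff (i - 1)) (-a * q.coeff i)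
  have h2 : f (-a * q.coeff i) = mul (neg (f a)) (f (q.coeff i)) := by
    rw [hf.map_mul, f_neg h hf]
  have h3 : f (if i = 0 then 0 else q.coeff (i - 1)) =
      (if i = 0 then zero else f (q.coeff (i - 1))) := by
    split <;> simp [hf.map_zero]
  rwa [h2, h3] at h1

end Aux3
section Aux4
open Polynomial
variable {H : Type*} {add : H → H → Set H} {mul : H → H → H} {neg : H → H} {zero one : H}
variable {K : Type*} [Field K] {f : K → H}
variable (h : IsHyperfield add mul neg zero one)
include h

lemma multge_le (a : H) : ∀ (k n : ℕ) (c : ℕ → H), c n ≠ zero →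
    MultGe add mul zero one neg a n c k → k ≤ n := by
  intro k
  induction k with
  | zero => intro n c _ _; exact Nat.zero_le n
  | succ k ih =>
    intro n c hcn hm
    obtain ⟨heval, d, hdeg, hlin, hm'⟩ := hm
    have hn : n ≠ 0 := by
      rintro rfl
      have heq : evalPoly add mul zero one 0 c a = {c 0} := by
        unfold evalPoly
        show (⋃ s ∈ hsum add zero [], add (mul (c 0) (hpow mul one a 0)) s) = {c 0}
        show (⋃ s ∈ ({zero} : Set H), add (mul (c 0) one) s) = {c 0}
        simp [aux_add_zero h, aux_mul_one h]
      rw [heq] at heval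
      exact hcn heval.symm
    have hdn1 : d (n - 1) = c n := by
      have h1 := hlin n
      rw [if_neg hn, hdeg n le_rfl, aux_mul_zero h, aux_add_zero h] at h1
      exact h1.symm
    have := ih (n - 1) d (by rw [hdn1]; exact hcn) hm'
    omega

lemma hmult_ge (a : H) (n k : ℕ) (c : ℕ → H) (hcn : c n ≠ zero)
    (hk : MultGe add mul zero one neg a n c k) :
    k ≤ hmult add mul zero one neg n c a :=
  le_csSup ⟨n, fun m hm => multge_le h a m n c hcn hm⟩ hk

variable (hf : IsHyperfieldHom (fun x y : K => ({x + y} : Set K)) (· * ·) 0 1 add mul zero one f)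
include hf

lemma multge_of_dvd (b : H) :
    ∀ (s : Multiset K) (p : Polynomial K), p ≠ 0 → (∀ a ∈ s, f a = b) →
      (s.map fun a => X - C a).prod ∣ p →
      MultGe add mul zero one neg b p.natDegree (fun i => f (p.coeff i)) (Multiset.card s) := by
  intro s
  induction s using Multiset.induction with
  | empty => intro p _ _ _; simp [MultGe]
  | cons a s ih =>
    intro p hp hfs hdvd
    rw [Multiset.map_cons, Multiset.prod_cons] at hdvd
    have hXa : (X - C a) ≠ 0 := X_sub_C_ne_zero a
    obtain ⟨q, hpq⟩ : (X - C a) ∣ p := (dvd_mul_right _ _).trans hdvd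
    have hq : q ≠ 0 := by rintro rfl; rw [mul_zero] at hpq; exact hp hpq
    have hrest : (s.map fun a => X - C a).prod ∣ q := by
      rw [hpq] at hdvd
      exact (mul_dvd_mul_iff_left hXa).mp hdvd
    have hfa : f a = b := hfs a (Multiset.mem_cons_self a s)
    have hdeg : p.natDegree = q.natDegree + 1 := by
      rw [hpq, natDegree_mul hXa hq, natDegree_X_sub_C]; omega
    rw [Multiset.card_cons]
    refine ⟨?_, fun i => f (q.coeff i), ?_, ?_, ?_⟩
    · have ha0 : p.eval a = 0 := by rw [hpq]; simp
      rw [← hfa]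
      exact f_eval_root h hf ha0
    · intro i hi
      have hz : q.coeff i = 0 := coeff_eq_zero_of_natDegree_lt (by omega)
      show f (q.coeff i) = zero
      rw [hz, hf.map_zero]
    · rw [← hfa, hpq]
      exact linfactor_push h hf a q
    · have := ih q hq (fun x hx => hfs x (Multiset.mem_cons_of_mem hx)) hrest
      have hd : p.natDegree - 1 = q.natDegree := by omega
      rwa [hd]

end Aux4
lemma fiber_sum {K H : Type*} [DecidableEq K] [DecidableEq H] (f : K → H) (s : Multiset K) :
    ∑ y ∈ s.toFinset.image f, (s.filter fun a => f a = y).card = Multiset.card s := by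
  have step : ∀ y, (s.filter fun a => f a = y).card
      = ∑ a ∈ s.toFinset.filter fun a => f a = y, s.count a := by
    intro y
    rw [← Multiset.toFinset_sum_count_eq, Multiset.toFinset_filter]
    apply Finset.sum_congr rfl
    intro a ha
    rw [Multiset.count_filter, if_pos (Finset.mem_filter.mp ha).2]
  calc ∑ y ∈ s.toFinset.image f, (s.filter fun a => f a = y).card
      = ∑ y ∈ s.toFinset.image f, ∑ a ∈ s.toFinset.filter fun a => f a = y, s.count a :=
        Finset.sum_congr rfl fun y _ => step y
    _ = ∑ a ∈ s.toFinset, s.count a :=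
        Finset.sum_fiberwise_of_maps_to (fun a ha => Finset.mem_image_of_mem f ha) _
    _ = Multiset.card s := Multiset.toFinset_sum_count_eq s

/-- let `K` be a field, `H` a hyperfield satisfying the
multiplicity bound, and `f : K → H` a hyperfield homomorphism. If `p ∈ K[X]`
splits into linear factors, then every root of `f_*(p)` lifts to a root of `p`. -/
theorem lift_root_of_splits {K : Type*} [Field K] {H : Type*}
    (add : H → H → Set H) (mul : H → H → H) (neg : H → H) (zero one : H)
    (h : IsHyperfield add mul neg zero one)
    (hbound : MultBound add mul zero one neg)
    (f : K → H)
    (hf : IsHyperfieldHom (fun x y : K => ({x + y} : Set K)) (· * ·) 0 1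
      add mul zero one f)
    (p : Polynomial K) (hp : p ≠ 0) (hsplit : p.Splits)
    (b : H)
    (hb : zero ∈ evalPoly add mul zero one p.natDegree (fun i => f (p.coeff i)) b) :
    ∃ a : K, f a = b ∧ p.eval a = 0 := by
  classical
  open Polynomial in
  by_contra hcon
  push_neg at hcon
  set n := p.natDegree with hn
  have hcn : (fun i => f (p.coeff i)) n ≠ zero := by
    show f (p.coeff n) ≠ zero
    exact f_ne_zero h hf fun hz => hp (Polynomial.leadingCoeff_eq_zero.mp hz)
  have hb1 : 1 ≤ hmult add mul zero one neg n (fun i => f (p.coeff i)) b := by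
    apply hmult_ge h b n 1 _ hcn
    obtain ⟨d, hd1, hd2⟩ := exists_factor_of_root h n (fun i => f (p.coeff i)) b
      (fun i hi => by
        show f (p.coeff i) = zero
        rw [p.coeff_eq_zero_of_natDegree_lt hi, hf.map_zero]) hb
    exact ⟨hb, d, hd1, hd2, trivial⟩
  set S := p.roots.toFinset.image f with hS
  have hbS : b ∉ S := by
    intro hmem
    rw [hS, Finset.mem_image] at hmem
    obtain ⟨a, ha, hfa⟩ := hmem
    rw [Multiset.mem_toFinset] at ha
    exact hcon a hfa ((Polynomial.mem_roots'.mp ha).2)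
  have hfib : ∀ y ∈ S, (p.roots.filter fun a => f a = y).card ≤
      hmult add mul zero one neg n (fun i => f (p.coeff i)) y := by
    intro y _
    apply hmult_ge h y n _ _ hcn
    apply multge_of_dvd h hf y (p.roots.filter fun a => f a = y) p hp
    · intro a ha; exact (Multiset.mem_filter.mp ha).2
    · exact dvd_trans
        (Multiset.prod_dvd_prod_of_le (Multiset.map_le_map (Multiset.filter_le _ _)))
        (Polynomial.prod_multiset_X_sub_C_dvd p)
  have hsum1 : ∑ y ∈ S, (p.roots.filter fun a => f a = y).card = n := by
    rw [hS, fiber_sum f p.roots]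
    exact (Polynomial.splits_iff_card_roots.mp hsplit)
  have hle := hbound n (fun i => f (p.coeff i)) hcn (insert b S)
  rw [Finset.sum_insert hbS] at hle
  have hge : ∑ y ∈ S, (p.roots.filter fun a => f a = y).card ≤
      ∑ y ∈ S, hmult add mul zero one neg n (fun i => f (p.coeff i)) y :=
    Finset.sum_le_sum hfib
  omega
end
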